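/- Let K be a field and I = (f_1,...,f_r) an ideal of K[X_1,...,X_m]. Then I is maximal if and only if I is prime and dim_K K[X_1,...,X_m]/I is finite. -/
import Mathlib


/-- Let `K` be a field and `I = (f₁,…,f_r)` an ideal of `K[X₁,…,Xₘ]`.  Then `I` is maximal if
and only if `I` is prime and `K[X₁,…,Xₘ]/I` is finite-dimensional over `K`. -/
theorem stmt_10 (K : Type) [Field K] (m r : ℕ) (f : Fin r → MvPolynomial (Fin m) K)
    (I : Ideal (MvPolynomial (Fin m) K)) (hI : I = Ideal.span (Set.range f)) :
    I.IsMaximal ↔ I.IsPrime ∧ FiniteDimensional K (MvPolynomial (Fin m) K ⧸ I) := by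
  constructor
  · intro h
    refine ⟨h.isPrime, ?_⟩
    letI : Field (MvPolynomial (Fin m) K ⧸ I) := Ideal.Quotient.field I
    exact finite_of_finite_type_of_isJacobsonRing K _
  · rintro ⟨hp, hfd⟩
    haveI : IsDomain (MvPolynomial (Fin m) K ⧸ I) := Ideal.Quotient.isDomain I
    haveI : Algebra.IsIntegral K (MvPolynomial (Fin m) K ⧸ I) :=
      Algebra.IsIntegral.of_finite K _
    have hF : IsField (MvPolynomial (Fin m) K ⧸ I) :=
      isField_of_isIntegral_of_isField' (Semifield.toIsField K)
    exact Ideal.Quotient.maximal_of_isField I hF
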